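/- For i.i.d. strictly β-stable nonnegative waiting times with β ∈ (0,1), the scaled renewal counting process has uniformly bounded expectation: there is a constant M such that E[N(nt)/n^β] ≤ t^β M for all n ≥ 1 and all t ≥ 0. -/

import Mathlib

open MeasureTheory ProbabilityTheory Filter

open scoped ENNReal

open scoped Topology

/-- The geometric-type series bound `∑_{m≥0} 2^{-⌊(m+1)/a⌋} ≤ 4a` for `a > 0`. -/
lemma geom_floor_sum_le (a : ℝ) (ha : 0 < a) :
    ∑' m : ℕ, (2⁻¹ : ℝ≥0∞) ^ ⌊((m : ℝ) + 1) / a⌋₊ ≤ ENNReal.ofReal (4 * a) := by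
  rcases le_or_gt a 1 with h1 | h1
  · -- small a
    set d : ℕ := ⌊1 / a⌋₊ with hd
    have hd1 : 1 ≤ d := Nat.le_floor (by rw [Nat.cast_one, le_div_iff₀ ha]; linarith)
    have hra : (2⁻¹ : ℝ) ^ d ≤ a := by
      have hda : (1:ℝ) / a < d + 1 := Nat.lt_floor_add_one _
      have h2d : (d : ℝ) + 1 ≤ 2 ^ d := by
        exact_mod_cast Nat.succ_le_of_lt (Nat.lt_two_pow_self (n := d))
      have hpos : (0:ℝ) < (d:ℝ) + 1 := by positivity
      have : (1:ℝ) / ((d:ℝ)+1) ≤ a := by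
        rw [div_le_iff₀ hpos]
        rw [div_lt_iff₀ ha] at hda
        nlinarith
      calc (2⁻¹ : ℝ) ^ d = 1 / 2 ^ d := by rw [inv_pow, one_div]
        _ ≤ 1 / ((d:ℝ)+1) := by
            apply one_div_le_one_div_of_le hpos h2d
        _ ≤ a := this
    have hr : (2⁻¹ : ℝ≥0∞) ^ d ≤ ENNReal.ofReal a := by
      have h2 : (2⁻¹ : ℝ≥0∞) ^ d = ENNReal.ofReal ((2⁻¹ : ℝ) ^ d) := by
        rw [ENNReal.ofReal_pow (by norm_num), ENNReal.ofReal_inv_of_pos (by norm_num),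
          ENNReal.ofReal_ofNat]
      rw [h2]
      exact ENNReal.ofReal_le_ofReal hra
    calc ∑' m : ℕ, (2⁻¹ : ℝ≥0∞) ^ ⌊((m : ℝ) + 1) / a⌋₊
        ≤ ∑' m : ℕ, ((2⁻¹ : ℝ≥0∞) ^ d) ^ (m + 1) := by
          apply ENNReal.tsum_le_tsum
          intro m
          rw [← pow_mul]
          apply pow_le_pow_of_le_one (by norm_num) (by norm_num)
          apply Nat.le_floor
          push_cast
          rw [le_div_iff₀ ha]
          have : (d : ℝ) ≤ 1 / a := Nat.floor_le (by positivity)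
          have hm : (0:ℝ) ≤ (m:ℝ) + 1 := by positivity
          calc (d:ℝ) * ((m:ℝ)+1) * a ≤ (1/a) * ((m:ℝ)+1) * a := by
                apply mul_le_mul_of_nonneg_right _ ha.le
                exact mul_le_mul_of_nonneg_right this hm
            _ = (m:ℝ) + 1 := by field_simp
      _ = (2⁻¹ : ℝ≥0∞)^d * ∑' m : ℕ, ((2⁻¹ : ℝ≥0∞) ^ d) ^ m := by
          rw [← ENNReal.tsum_mul_left]
          congr 1; ext m; rw [pow_succ, mul_comm]
      _ ≤ ENNReal.ofReal a * 2 := by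
          apply mul_le_mul' hr
          rw [ENNReal.tsum_geometric]
          have : (1 : ℝ≥0∞) - 2⁻¹ ^ d ≥ 2⁻¹ := by
            have : (2⁻¹ : ℝ≥0∞) ^ d ≤ 2⁻¹ := by
              calc (2⁻¹ : ℝ≥0∞) ^ d ≤ 2⁻¹ ^ 1 :=
                pow_le_pow_of_le_one zero_le (by norm_num) hd1
                _ = 2⁻¹ := pow_one _
            calc (2⁻¹:ℝ≥0∞) = 1 - 2⁻¹ := by
                  rw [ENNReal.sub_eq_of_eq_add (by norm_num)]; rw [ENNReal.inv_two_add_inv_two]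
              _ ≤ 1 - 2⁻¹ ^ d := tsub_le_tsub_left this 1
          calc ((1:ℝ≥0∞) - 2⁻¹ ^ d)⁻¹ ≤ (2⁻¹:ℝ≥0∞)⁻¹ := ENNReal.inv_le_inv' this
            _ = 2 := by simp
      _ ≤ ENNReal.ofReal (4 * a) := by
          rw [show (4:ℝ) * a = a * 4 by ring, ENNReal.ofReal_mul ha.le]
          apply mul_le_mul' le_rfl
          norm_num
  · -- large a
    set c : ℕ := ⌈a⌉₊ with hcdef
    have hc1 : 1 ≤ c := Nat.one_le_ceil_iff.mpr ha
    have hac : a ≤ (c:ℝ) := Nat.le_ceil a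
    haveI : NeZero c := ⟨by omega⟩
    calc ∑' m : ℕ, (2⁻¹ : ℝ≥0∞) ^ ⌊((m : ℝ) + 1) / a⌋₊
        ≤ ∑' m : ℕ, (2⁻¹ : ℝ≥0∞) ^ ((m+1) / c) := by
          apply ENNReal.tsum_le_tsum
          intro m
          apply pow_le_pow_of_le_one zero_le (by norm_num)
          apply Nat.le_floor
          calc (((m+1) / c : ℕ) : ℝ) ≤ ((m+1 : ℕ):ℝ) / (c:ℝ) := Nat.cast_div_le
            _ ≤ ((m:ℝ) + 1) / a := by
                push_cast
                gcongr
      _ ≤ ∑' k : ℕ, (2⁻¹ : ℝ≥0∞) ^ (k / c) :=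
          ENNReal.tsum_comp_le_tsum_of_injective Nat.succ_injective _
      _ = ∑' p : ℕ × Fin c, (2⁻¹ : ℝ≥0∞) ^ p.1 := by
          rw [← Equiv.tsum_eq (Nat.divModEquiv c) (fun p : ℕ × Fin c => (2⁻¹ : ℝ≥0∞) ^ p.1)]
          simp [Nat.divModEquiv]
      _ = ∑' q : ℕ, (c : ℝ≥0∞) * 2⁻¹ ^ q := by
          rw [ENNReal.tsum_prod (f := fun a (_ : Fin c) => (2⁻¹:ℝ≥0∞) ^ a)]
          congr 1
          ext q
          rw [tsum_fintype]
          simp [Finset.sum_const, mul_comm]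
      _ = (c : ℝ≥0∞) * 2 := by
          rw [ENNReal.tsum_mul_left, ENNReal.tsum_geometric, ENNReal.one_sub_inv_two]
          congr 1
          simp
      _ ≤ ENNReal.ofReal (4 * a) := by
          rw [show ((c:ℝ≥0∞)) = ENNReal.ofReal (c:ℝ) by rw [ENNReal.ofReal_natCast],
            show ((2:ℝ≥0∞)) = ENNReal.ofReal (2:ℝ) by norm_num,
            ← ENNReal.ofReal_mul (by positivity)]
          apply ENNReal.ofReal_le_ofReal
          have : (c:ℝ) < a + 1 := Nat.ceil_lt_add_one ha.le
          nlinarith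

/-- The renewal counting process `N(t) = max{m ≥ 0 : T(m) ≤ t}`. -/
noncomputable def renewalCount {Ω : Type*} (τ : ℕ → Ω → ℝ) (t : ℝ) (ω : Ω) : ℕ :=
  sSup {m : ℕ | ∑ i ∈ Finset.range m, τ i ω ≤ t}

/-- The expectation of the renewal count is dominated by the sum of the probabilities
`P(T(m+1) ≤ s)`. -/
lemma lintegral_renewalCount_le {Ω : Type*} [MeasurableSpace Ω] (μ : Measure Ω)
    [IsProbabilityMeasure μ]
    (τ : ℕ → Ω → ℝ) (hτmeas : ∀ i, Measurable (τ i)) (hτpos : ∀ i ω, 0 < τ i ω)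
    (s : ℝ) (hs : 0 ≤ s) :
    ∫⁻ ω, (renewalCount τ s ω : ℝ≥0∞) ∂μ ≤
      ∑' m : ℕ, μ {ω | ∑ i ∈ Finset.range (m+1), τ i ω ≤ s} := by
  have hsets : ∀ k : ℕ, MeasurableSet {ω | ∑ i ∈ Finset.range k, τ i ω ≤ s} := fun k =>
    measurableSet_le (Finset.measurable_sum _ fun i _ => hτmeas i) measurable_const
  have hpt : ∀ ω, (renewalCount τ s ω : ℝ≥0∞) ≤
      ∑' m : ℕ, Set.indicator {ω' | ∑ i ∈ Finset.range (m+1), τ i ω' ≤ s}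
        (1 : Ω → ℝ≥0∞) ω := by
    intro ω
    by_cases hb : BddAbove {m : ℕ | ∑ i ∈ Finset.range m, τ i ω ≤ s}
    · have h0 : 0 ∈ {m : ℕ | ∑ i ∈ Finset.range m, τ i ω ≤ s} := by simp [hs]
      have hmem := Nat.sSup_mem ⟨0, h0⟩ hb
      set N := sSup {m : ℕ | ∑ i ∈ Finset.range m, τ i ω ≤ s} with hN
      have key : ∀ m, m < N → ∑ i ∈ Finset.range (m+1), τ i ω ≤ s := by
        intro m hm
        refine le_trans ?_ hmem
        apply Finset.sum_le_sum_of_subset_of_nonneg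
        · exact Finset.range_subset_range.mpr hm
        · exact fun i _ _ => (hτpos i ω).le
      have hRC : renewalCount τ s ω = N := rfl
      have : (renewalCount τ s ω : ℝ≥0∞) =
          ∑ m ∈ Finset.range N, Set.indicator {ω' | ∑ i ∈ Finset.range (m+1), τ i ω' ≤ s}
            (1 : Ω → ℝ≥0∞) ω := by
        rw [hRC]
        rw [Finset.sum_congr rfl (fun m hm => Set.indicator_of_mem
          (show ω ∈ {ω' | ∑ i ∈ Finset.range (m+1), τ i ω' ≤ s} from
            key m (Finset.mem_range.mp hm)) (1 : Ω → ℝ≥0∞))]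
        simp
      rw [this]
      exact ENNReal.sum_le_tsum _
    · have : renewalCount τ s ω = 0 := by
        rw [renewalCount, csSup_of_not_bddAbove hb, csSup_empty]
        rfl
      simp [this]
  calc ∫⁻ ω, (renewalCount τ s ω : ℝ≥0∞) ∂μ
      ≤ ∫⁻ ω, ∑' m : ℕ, Set.indicator {ω' | ∑ i ∈ Finset.range (m+1), τ i ω' ≤ s}
          (1 : Ω → ℝ≥0∞) ω ∂μ := lintegral_mono hpt
    _ = ∑' m : ℕ, ∫⁻ ω, Set.indicator {ω' | ∑ i ∈ Finset.range (m+1), τ i ω' ≤ s}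
          (1 : Ω → ℝ≥0∞) ω ∂μ :=
        lintegral_tsum fun m => (measurable_one.indicator (hsets (m+1))).aemeasurable
    _ = ∑' m : ℕ, μ {ω | ∑ i ∈ Finset.range (m+1), τ i ω ≤ s} := by
        congr 1
        ext m
        exact lintegral_indicator_one (hsets (m+1))

/-- For i.i.d. strictly `β`-stable positive waiting times with `β ∈ (0,1)` (so the partial
sum `T(k)` has the same law as `k^{1/β} τ_1`), the scaled renewal counting process has
uniformly bounded expectation: there is a constant `M` with
`E[N(nt)/n^β] ≤ t^β M` for all `n ≥ 1` and all `t ≥ 0`. -/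
theorem expectation_renewalCount_le_of_stable
    {Ω : Type*} [MeasurableSpace Ω] (μ : Measure Ω) [IsProbabilityMeasure μ]
    (τ : ℕ → Ω → ℝ) (β : ℝ) (hβ : β ∈ Set.Ioo (0 : ℝ) 1)
    (hτmeas : ∀ i, Measurable (τ i)) (hτpos : ∀ i ω, 0 < τ i ω)
    -- the waiting times are i.i.d.
    (hτindep : iIndepFun τ μ)
    (hτid : ∀ i, IdentDistrib (τ i) (τ 0) μ μ)
    -- strict `β`-stability: `T(k) =ᵈ k^{1/β} τ_1`
    (hstable : ∀ k : ℕ, IdentDistrib (fun ω => ∑ i ∈ Finset.range k, τ i ω)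
      (fun ω => (k : ℝ) ^ (1 / β) * τ 0 ω) μ μ) :
    ∃ M : ℝ, 0 ≤ M ∧ ∀ n : ℕ, 1 ≤ n → ∀ t : ℝ, 0 ≤ t →
      ∫⁻ ω, (renewalCount τ ((n : ℝ) * t) ω : ℝ≥0∞) ∂μ ≤
        ENNReal.ofReal (t ^ β * M) * ENNReal.ofReal ((n : ℝ) ^ β) := by
  have hβ0 := hβ.1
  -- find s0 > 0 with P(τ0 ≤ s0) ≤ 1/2
  obtain ⟨s0, hs0, hq⟩ : ∃ s0 : ℝ, 0 < s0 ∧ μ {ω | τ 0 ω ≤ s0} ≤ 2⁻¹ := by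
    have htend : Tendsto (fun n : ℕ => μ {ω | τ 0 ω ≤ 1 / ((n:ℝ) + 1)}) atTop (𝓝 0) := by
      have hmeas : ∀ n : ℕ, NullMeasurableSet {ω | τ 0 ω ≤ 1 / ((n:ℝ)+1)} μ := fun n =>
        (measurableSet_le (hτmeas 0) measurable_const).nullMeasurableSet
      have hanti : Antitone (fun n : ℕ => {ω | τ 0 ω ≤ 1 / ((n:ℝ)+1)}) := by
        intro n m hnm ω hω
        simp only [Set.mem_setOf_eq] at *
        refine hω.trans ?_
        have h1 : ((n:ℝ)+1) ≤ ((m:ℝ)+1) := by exact_mod_cast Nat.succ_le_succ hnm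
        gcongr
      have hempty : (⋂ n : ℕ, {ω | τ 0 ω ≤ 1 / ((n:ℝ)+1)}) = ∅ := by
        ext ω
        simp only [Set.mem_iInter, Set.mem_setOf_eq, Set.mem_empty_iff_false, iff_false,
          not_forall]
        obtain ⟨n, hn⟩ := exists_nat_one_div_lt (hτpos 0 ω)
        exact ⟨n, not_le.mpr hn⟩
      have := tendsto_measure_iInter_atTop hmeas hanti ⟨0, measure_ne_top _ _⟩
      rwa [hempty, measure_empty] at this
    obtain ⟨n, hn⟩ :=
      (htend.eventually_lt_const (show (0:ℝ≥0∞) < 2⁻¹ by norm_num)).exists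
    exact ⟨1 / ((n:ℝ)+1), by positivity, hn.le⟩
  -- reduction of T_k-events to τ0-events
  have hred : ∀ (k : ℕ) (u : ℝ), 1 ≤ k →
      μ {ω | ∑ i ∈ Finset.range k, τ i ω ≤ u} = μ {ω | τ 0 ω ≤ u / (k:ℝ) ^ (1/β)} := by
    intro k u hk
    have hck : (0:ℝ) < (k:ℝ) ^ (1/β) :=
      Real.rpow_pos_of_pos (by exact_mod_cast Nat.lt_of_lt_of_le Nat.zero_lt_one hk) _
    have h1 := (hstable k).measure_mem_eq (measurableSet_Iic (a := u))
    have h2 : (fun ω => ∑ i ∈ Finset.range k, τ i ω) ⁻¹' Set.Iic u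
        = {ω | ∑ i ∈ Finset.range k, τ i ω ≤ u} := rfl
    have h3 : (fun ω => (k:ℝ) ^ (1/β) * τ 0 ω) ⁻¹' Set.Iic u
        = {ω | τ 0 ω ≤ u / (k:ℝ) ^ (1/β)} := by
      ext ω
      simp only [Set.mem_preimage, Set.mem_Iic, Set.mem_setOf_eq]
      rw [← le_div_iff₀' hck]
    rw [h2, h3] at h1
    exact h1
  -- independence bound
  have hind : ∀ j : ℕ, μ {ω | ∑ i ∈ Finset.range j, τ i ω ≤ s0} ≤ (2⁻¹ : ℝ≥0∞) ^ j := by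
    intro j
    have hsub : {ω | ∑ i ∈ Finset.range j, τ i ω ≤ s0}
        ⊆ ⋂ i ∈ Finset.range j, τ i ⁻¹' Set.Iic s0 := by
      intro ω hω
      simp only [Set.mem_iInter, Set.mem_preimage, Set.mem_Iic]
      intro i hi
      refine le_trans ?_ hω
      exact Finset.single_le_sum (fun i _ => (hτpos i ω).le) hi
    calc μ {ω | ∑ i ∈ Finset.range j, τ i ω ≤ s0}
        ≤ μ (⋂ i ∈ Finset.range j, τ i ⁻¹' Set.Iic s0) := measure_mono hsub
      _ = ∏ i ∈ Finset.range j, μ (τ i ⁻¹' Set.Iic s0) :=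
          hτindep.measure_inter_preimage_eq_mul (Finset.range j)
            (fun i _ => measurableSet_Iic)
      _ = ∏ i ∈ Finset.range j, μ {ω | τ 0 ω ≤ s0} := by
          refine Finset.prod_congr rfl fun i _ => ?_
          exact (hτid i).measure_mem_eq measurableSet_Iic
      _ = μ {ω | τ 0 ω ≤ s0} ^ j := by rw [Finset.prod_const, Finset.card_range]
      _ ≤ (2⁻¹ : ℝ≥0∞) ^ j := pow_le_pow_left' hq j
  -- the per-term bound for s > 0
  have hkey : ∀ (s : ℝ), 0 < s → ∀ m : ℕ,
      μ {ω | ∑ i ∈ Finset.range (m+1), τ i ω ≤ s} ≤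
        (2⁻¹ : ℝ≥0∞) ^ ⌊((m:ℝ) + 1) / ((s/s0) ^ β)⌋₊ := by
    intro s hs m
    set a : ℝ := (s/s0) ^ β with hadef
    have ha : 0 < a := Real.rpow_pos_of_pos (div_pos hs hs0) β
    set j : ℕ := ⌊((m:ℝ) + 1) / a⌋₊ with hjdef
    rcases Nat.eq_zero_or_pos j with hj0 | hj1
    · rw [hj0, pow_zero]
      exact prob_le_one
    · have hja : (j:ℝ) * a ≤ (m:ℝ) + 1 := by
        have : (j:ℝ) ≤ ((m:ℝ) + 1) / a := Nat.floor_le (by positivity)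
        calc (j:ℝ) * a ≤ (((m:ℝ)+1)/a) * a := mul_le_mul_of_nonneg_right this ha.le
          _ = (m:ℝ) + 1 := by field_simp
      have hjpos : (0:ℝ) < j := by exact_mod_cast hj1
      have hdiv : s / ((m:ℝ)+1) ^ (1/β) ≤ s0 / (j:ℝ) ^ (1/β) := by
        have h1 : ((j:ℝ) * a) ^ (1/β) ≤ (((m:ℝ)+1)) ^ (1/β) :=
          Real.rpow_le_rpow (by positivity) hja (by positivity)
        have h2 : ((j:ℝ) * a) ^ (1/β) = (j:ℝ) ^ (1/β) * a ^ (1/β) :=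
          Real.mul_rpow hjpos.le ha.le
        have h3 : a ^ (1/β) = s / s0 := by
          rw [hadef, ← Real.rpow_mul (by positivity), mul_one_div_cancel hβ0.ne', Real.rpow_one]
        have h4 : (j:ℝ) ^ (1/β) * (s/s0) ≤ ((m:ℝ)+1) ^ (1/β) := by
          rw [← h3, ← h2]; exact h1
        have hjp : (0:ℝ) < (j:ℝ) ^ (1/β) := Real.rpow_pos_of_pos hjpos _
        have hmp : (0:ℝ) < ((m:ℝ)+1) ^ (1/β) := Real.rpow_pos_of_pos (by positivity) _
        rw [div_le_div_iff₀ hmp hjp]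
        have h5 : (j:ℝ)^(1/β) * (s/s0) * s0 ≤ ((m:ℝ)+1)^(1/β) * s0 :=
          mul_le_mul_of_nonneg_right h4 hs0.le
        have h6 : (j:ℝ)^(1/β) * (s/s0) * s0 = s * (j:ℝ)^(1/β) := by field_simp
        linarith
      have hsubset : {ω | τ 0 ω ≤ s / ((m:ℝ)+1) ^ (1/β)}
          ⊆ {ω | τ 0 ω ≤ s0 / (j:ℝ) ^ (1/β)} :=
        fun ω hω => le_trans hω hdiv
      calc μ {ω | ∑ i ∈ Finset.range (m+1), τ i ω ≤ s}
          = μ {ω | τ 0 ω ≤ s / ((m+1:ℕ):ℝ) ^ (1/β)} := hred (m+1) s (Nat.le_add_left 1 m)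
        _ = μ {ω | τ 0 ω ≤ s / ((m:ℝ)+1) ^ (1/β)} := by push_cast; rfl
        _ ≤ μ {ω | τ 0 ω ≤ s0 / ((j:ℕ):ℝ) ^ (1/β)} := measure_mono hsubset
        _ = μ {ω | ∑ i ∈ Finset.range j, τ i ω ≤ s0} := (hred j s0 hj1).symm
        _ ≤ (2⁻¹ : ℝ≥0∞) ^ j := hind j
  -- the constant
  refine ⟨4 / s0 ^ β, by positivity, ?_⟩
  intro n hn t ht
  have hn1 : (1:ℝ) ≤ (n:ℝ) := by exact_mod_cast hn
  rcases eq_or_lt_of_le ht with ht0 | htpos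
  · -- t = 0 : each probability vanishes
    have hz : ∀ m : ℕ, μ {ω | ∑ i ∈ Finset.range (m+1), τ i ω ≤ (n:ℝ) * t} = 0 := by
      intro m
      rw [← ht0, mul_zero]
      convert measure_empty
      · ext ω
        simp only [Set.mem_setOf_eq, Set.mem_empty_iff_false, iff_false, not_le]
        exact Finset.sum_pos (fun i _ => hτpos i ω) ⟨0, Finset.mem_range.mpr (Nat.succ_pos m)⟩
      · infer_instance
    calc ∫⁻ ω, (renewalCount τ ((n : ℝ) * t) ω : ℝ≥0∞) ∂μ
        ≤ ∑' m : ℕ, μ {ω | ∑ i ∈ Finset.range (m+1), τ i ω ≤ (n:ℝ) * t} :=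
          lintegral_renewalCount_le μ τ hτmeas hτpos _ (by positivity)
      _ = 0 := by simp [hz]
      _ ≤ _ := zero_le
  · -- t > 0
    set s : ℝ := (n:ℝ) * t with hsdef
    have hs : 0 < s := by positivity
    set a : ℝ := (s/s0) ^ β with hadef
    have ha : 0 < a := Real.rpow_pos_of_pos (div_pos hs hs0) β
    have hfinal : ENNReal.ofReal (4 * a) =
        ENNReal.ofReal (t ^ β * (4 / s0 ^ β)) * ENNReal.ofReal ((n : ℝ) ^ β) := by
      rw [← ENNReal.ofReal_mul (by positivity)]
      congr 1
      rw [hadef, hsdef, Real.div_rpow (by positivity) hs0.le, Real.mul_rpow (by positivity) htpos.le]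
      field_simp
    calc ∫⁻ ω, (renewalCount τ ((n : ℝ) * t) ω : ℝ≥0∞) ∂μ
        ≤ ∑' m : ℕ, μ {ω | ∑ i ∈ Finset.range (m+1), τ i ω ≤ s} :=
          lintegral_renewalCount_le μ τ hτmeas hτpos _ hs.le
      _ ≤ ∑' m : ℕ, (2⁻¹ : ℝ≥0∞) ^ ⌊((m:ℝ) + 1) / a⌋₊ :=
          ENNReal.tsum_le_tsum fun m => hkey s hs m
      _ ≤ ENNReal.ofReal (4 * a) := geom_floor_sum_le a ha
      _ = _ := hfinal
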